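/- The set of matrices X ∈ sl₂(ℝ) with det(X) = 1, trace(X) = 0 and lower-left entry c₂₁(X) > 0 is exactly the set of matrices of the form ẑ J ẑ⁻¹ where ẑ = [[y, x],[0,1]] with y > 0, and J = [[0,-1],[1,0]]. -/
import Mathlib

open Matrix

lemma aux_inv (x y : ℝ) (hy : y ≠ 0) :
    (!![y, x; 0, 1])⁻¹ = !![1/y, -x/y; 0, 1] := by
  apply Matrix.inv_eq_right_inv
  ext i j
  fin_cases i <;> fin_cases j <;>
    simp [Matrix.mul_apply, Fin.sum_univ_two] <;> field_simp <;> ring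

lemma aux_conj (x y : ℝ) (hy : y ≠ 0) :
    !![y, x; 0, 1] * !![0, -1; 1, 0] * (!![y, x; 0, 1])⁻¹ =
      !![x/y, -(x*x)/y - y; 1/y, -(x/y)] := by
  rw [aux_inv x y hy, Matrix.mul_fin_two, Matrix.mul_fin_two]
  congr 1 <;> field_simp <;> ring

theorem stmt_2 :
    {X : Matrix (Fin 2) (Fin 2) ℝ | X.det = 1 ∧ X.trace = 0 ∧ 0 < X 1 0} =
      {X : Matrix (Fin 2) (Fin 2) ℝ | ∃ x y : ℝ, 0 < y ∧
        X = !![y, x; 0, 1] * !![0, -1; 1, 0] * (!![y, x; 0, 1])⁻¹} := by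
  ext X
  simp only [Set.mem_setOf_eq]
  constructor
  · rintro ⟨hdet, htr, hc⟩
    have hc' : X 1 0 ≠ 0 := ne_of_gt hc
    refine ⟨X 0 0 / X 1 0, 1 / X 1 0, by positivity, ?_⟩
    rw [aux_conj _ _ (by positivity)]
    rw [Matrix.det_fin_two] at hdet
    rw [Matrix.trace_fin_two] at htr
    have h11 : X 1 1 = -X 0 0 := by linarith
    have h01 : X 0 1 = (-(X 0 0 * X 0 0) - 1) / X 1 0 := by
      rw [eq_div_iff hc']
      linear_combination -hdet + X 0 0 * htr
    ext i j
    fin_cases i <;> fin_cases j <;>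
      simp [h11, h01] <;> field_simp <;> ring
  · rintro ⟨x, y, hy, rfl⟩
    rw [aux_conj x y (ne_of_gt hy)]
    refine ⟨?_, ?_, ?_⟩
    · rw [Matrix.det_fin_two_of]
      field_simp
      ring
    · rw [Matrix.trace_fin_two]
      simp
    · simp
      positivity
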